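/- If R is a right H-ring and a right max-ring, then every right R-module is a co-Kasch module. -/

import Mathlib

def IsCoKasch (R : Type*) [Ring R] (M : Type*) [AddCommGroup M] [Module R M] : Prop :=
  ∀ (K : Submodule R M) (S : Submodule R (M ⧸ K)), IsSimpleModule R S →
    ∃ f : M →ₗ[R] S, Function.Surjective f

/-- `E` together with the embedding `i : S →ₗ[R] E` is an injective hull of `S`:
`E` is injective and `i` is an essential monomorphism. -/
def IsInjectiveHull (R : Type*) [Ring R] {S E : Type*} [AddCommGroup S] [Module R S]
    [AddCommGroup E] [Module R E] (i : S →ₗ[R] E) : Prop :=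
  Module.Injective R E ∧ Function.Injective i ∧
    ∀ N : Submodule R E, N ≠ ⊥ → N ⊓ LinearMap.range i ≠ ⊥

/-- `R` is a right `H`-ring: `Hom(E(S₁), E(S₂)) = 0` for all nonisomorphic
simple modules `S₁`, `S₂`. -/
def IsHRing (R : Type u) [Ring R] : Prop :=
  ∀ (S₁ S₂ E₁ E₂ : Type u) [AddCommGroup S₁] [Module R S₁] [AddCommGroup S₂] [Module R S₂]
    [AddCommGroup E₁] [Module R E₁] [AddCommGroup E₂] [Module R E₂],
    IsSimpleModule R S₁ → IsSimpleModule R S₂ → IsEmpty (S₁ ≃ₗ[R] S₂) →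
    ∀ (i₁ : S₁ →ₗ[R] E₁) (i₂ : S₂ →ₗ[R] E₂),
      IsInjectiveHull R i₁ → IsInjectiveHull R i₂ →
      ∀ f : E₁ →ₗ[R] E₂, f = 0

section AuxHull
open Submodule

section Ambient
variable {R : Type u} [Ring R] {Q : Type u} [AddCommGroup Q] [Module R Q]


/-- `A` is an essential submodule of `E` (inside the ambient module `Q`). -/
def EssIn (A E : Submodule R Q) : Prop :=
  A ≤ E ∧ ∀ P : Submodule R Q, P ≤ E → P ≠ ⊥ → P ⊓ A ≠ ⊥

lemma essIn_self (A : Submodule R Q) : EssIn A A :=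
  ⟨le_rfl, fun P hPA hP => by rwa [inf_eq_left.mpr hPA]⟩

lemma exists_maximal_essIn (A : Submodule R Q) :
    ∃ E, EssIn A E ∧ ∀ F, EssIn A F → E ≤ F → F = E := by
  have ih : ∀ c ⊆ {E | EssIn A E}, IsChain (· ≤ ·) c → ∀ y ∈ c,
      ∃ ub ∈ {E | EssIn A E}, ∀ z ∈ c, z ≤ ub := by
    intro c hcs hchain y hy
    refine ⟨sSup c, ⟨le_trans (hcs hy).1 (le_sSup hy), ?_⟩, fun z hz => le_sSup hz⟩
    intro P hP hPne
    obtain ⟨x, hxP, hx0⟩ := (Submodule.ne_bot_iff P).mp hPne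
    have hxs : x ∈ sSup c := hP hxP
    rw [Submodule.mem_sSup_of_directed ⟨y, hy⟩ hchain.directedOn] at hxs
    obtain ⟨E', hE'c, hxE'⟩ := hxs
    have h1 : (span R {x} : Submodule R Q) ⊓ A ≠ ⊥ := by
      refine (hcs hE'c).2 _ ?_ ?_
      · rwa [span_singleton_le_iff_mem]
      · simpa [Submodule.span_singleton_eq_bot] using hx0
    intro hcon
    exact h1 (le_bot_iff.mp (le_trans
      (inf_le_inf_right A (by rwa [span_singleton_le_iff_mem])) hcon.le))
  obtain ⟨E, _, hE⟩ := zorn_le_nonempty₀ {E | EssIn A E} ih A (essIn_self A)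
  exact ⟨E, hE.1, fun F hF hEF => le_antisymm (hE.2 hF hEF) hEF⟩

lemma exists_maximal_disjoint (E : Submodule R Q) :
    ∃ N : Submodule R Q, N ⊓ E = ⊥ ∧ ∀ N', N ≤ N' → N' ⊓ E = ⊥ → N' ≤ N := by
  have ih : ∀ c ⊆ {N : Submodule R Q | N ⊓ E = ⊥}, IsChain (· ≤ ·) c → ∀ y ∈ c,
      ∃ ub ∈ {N : Submodule R Q | N ⊓ E = ⊥}, ∀ z ∈ c, z ≤ ub := by
    intro c hcs hchain y hy
    refine ⟨sSup c, ?_, fun z hz => le_sSup hz⟩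
    rw [Set.mem_setOf_eq, eq_bot_iff]
    rintro x ⟨hx1, hx2⟩
    rw [SetLike.mem_coe] at hx1
    rw [Submodule.mem_sSup_of_directed ⟨y, hy⟩ hchain.directedOn] at hx1
    obtain ⟨N', hN'c, hxN'⟩ := hx1
    have : x ∈ N' ⊓ E := ⟨hxN', hx2⟩
    rwa [hcs hN'c] at this
  obtain ⟨N, _, hN⟩ := zorn_le_nonempty₀ {N : Submodule R Q | N ⊓ E = ⊥} ih ⊥ (by simp)
  exact ⟨N, hN.1, fun N' hNN' h' => hN.2 h' hNN'⟩

end Ambient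

variable (R : Type u) [Ring R] in

theorem exists_embed_injective (A : Type u) [AddCommGroup A] [Module R A] :
    ∃ (Q : Type u) (_ : AddCommGroup Q) (_ : Module R Q) (ι : A →ₗ[R] Q),
      Module.Injective R Q ∧ Function.Injective ι := by
  let Qc := CategoryTheory.Injective.under (ModuleCat.of R A)
  have hmono : CategoryTheory.Mono (CategoryTheory.Injective.ι (ModuleCat.of R A)) :=
    inferInstance
  have hinjobj : CategoryTheory.Injective (ModuleCat.of R Qc) := by
    rw [ModuleCat.of_coe]; infer_instance
  refine ⟨Qc, inferInstance, inferInstance,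
    ((CategoryTheory.Injective.ι (ModuleCat.of R A)).hom : A →ₗ[R] Qc), ?_, ?_⟩
  · exact Module.injective_module_of_injective_object R Qc
  · exact (ModuleCat.mono_iff_injective (CategoryTheory.Injective.ι (ModuleCat.of R A))).mp hmono

theorem exists_injective_hull (R : Type u) [Ring R] (A : Type u) [AddCommGroup A] [Module R A] :
    ∃ (E : Type u) (_ : AddCommGroup E) (_ : Module R E) (i : A →ₗ[R] E),
      IsInjectiveHull R i := by
  obtain ⟨Q, _, _, ι, hQinj, hι⟩ := exists_embed_injective R A
  set A' : Submodule R Q := LinearMap.range ι with hA'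
  obtain ⟨E, ⟨hAE, hEss⟩, hEmax⟩ := exists_maximal_essIn A'
  obtain ⟨N, hNE, hNmax⟩ := exists_maximal_disjoint E
  set π : Q →ₗ[R] Q ⧸ N := N.mkQ with hπ
  set πE : (↥E) →ₗ[R] Q ⧸ N := π.comp E.subtype with hπE
  have hπE_apply : ∀ e : ↥E, πE e = π (e : Q) := fun e => rfl
  have hπE_inj : Function.Injective πE := by
    intro a b hab
    have h1 : πE (a - b) = 0 := by rw [map_sub, hab, sub_self]
    have h2 : ((a - b : ↥E) : Q) ∈ N := by
      rw [← Submodule.Quotient.mk_eq_zero]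
      simpa [hπE_apply, hπ, Submodule.mkQ_apply] using h1
    have h3 : ((a - b : ↥E) : Q) ∈ N ⊓ E := ⟨h2, (a - b : ↥E).2⟩
    rw [hNE] at h3
    have : a - b = 0 := Subtype.ext (by simpa using h3)
    exact sub_eq_zero.mp this
  obtain ⟨h, hh⟩ := hQinj.out πE hπE_inj E.subtype
  have hquot_ess : ∀ Pq : Submodule R (Q ⧸ N), Pq ≠ ⊥ → Pq ⊓ LinearMap.range πE ≠ ⊥ := by
    intro Pq hPq
    obtain ⟨y, hyPq, hy0⟩ := (Submodule.ne_bot_iff Pq).mp hPq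
    obtain ⟨q, rfl⟩ := N.mkQ_surjective y
    set P' := Pq.comap π with hP'
    have hNP' : N ≤ P' := by
      intro n hn
      show π n ∈ Pq
      have : π n = 0 := (Submodule.Quotient.mk_eq_zero N).mpr hn
      rw [this]; exact Pq.zero_mem
    have hqP' : q ∈ P' := hyPq
    have hqN : q ∉ N := fun hq => hy0 ((Submodule.Quotient.mk_eq_zero N).mpr hq)
    have hP'E : P' ⊓ E ≠ ⊥ := fun hcon => hqN (hNmax P' hNP' hcon hqP')
    obtain ⟨x, hx, hx0⟩ := (Submodule.ne_bot_iff _).mp hP'E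
    refine (Submodule.ne_bot_iff _).mpr ⟨π x, ⟨hx.1, ⟨⟨x, hx.2⟩, rfl⟩⟩, ?_⟩
    intro hπx
    have hmem : x ∈ N ⊓ E := ⟨(Submodule.Quotient.mk_eq_zero N).mp hπx, hx.2⟩
    rw [hNE] at hmem
    exact hx0 (by simpa using hmem)
  have hhinj : Function.Injective h := by
    rw [← LinearMap.ker_eq_bot]
    by_contra hker
    obtain ⟨y, ⟨hyk, e, rfl⟩, hy0⟩ :=
      (Submodule.ne_bot_iff _).mp (hquot_ess (LinearMap.ker h) hker)
    have : h (πE e) = 0 := hyk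
    rw [hh e] at this
    have : e = 0 := Subtype.ext (by simpa using this)
    exact hy0 (by rw [this, map_zero])
  have hEle : E ≤ LinearMap.range h := by
    intro x hx
    exact ⟨πE ⟨x, hx⟩, hh ⟨x, hx⟩⟩
  have hness : EssIn A' (LinearMap.range h) := by
    refine ⟨le_trans hAE hEle, ?_⟩
    intro P hP hPne
    obtain ⟨x, hxP, hx0⟩ := (Submodule.ne_bot_iff P).mp hPne
    obtain ⟨y, hyx⟩ := hP hxP
    have hPy : P.comap h ≠ ⊥ := by
      refine (Submodule.ne_bot_iff _).mpr ⟨y, ?_, ?_⟩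
      · show h y ∈ P; rw [hyx]; exact hxP
      · rintro rfl; exact hx0 (by rw [← hyx]; simp)
    obtain ⟨z, ⟨hzP, e, rfl⟩, hz0⟩ := (Submodule.ne_bot_iff _).mp (hquot_ess _ hPy)
    have he0 : (e : Q) ≠ 0 := by
      intro h0
      apply hz0
      have he : e = 0 := by exact_mod_cast h0
      rw [he, map_zero]
    have heP : (e : Q) ∈ P := by
      have : h (πE e) ∈ P := hzP
      rwa [hh e] at this
    have hspan : (span R {(e : Q)}) ⊓ A' ≠ ⊥ := by
      refine hEss _ ?_ ?_
      · rw [span_singleton_le_iff_mem]; exact e.2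
      · simpa [Submodule.span_singleton_eq_bot] using he0
    intro hcon
    refine hspan (le_bot_iff.mp (le_trans (inf_le_inf_right A' ?_) hcon.le))
    rw [span_singleton_le_iff_mem]; exact heP
  have hFE : LinearMap.range h = E := hEmax _ hness hEle
  have hπE_surj : Function.Surjective πE := by
    intro y
    have hy : h y ∈ E := hFE ▸ ⟨y, rfl⟩
    exact ⟨⟨h y, hy⟩, hhinj (by rw [hh ⟨h y, hy⟩]; rfl)⟩
  have hcompl : IsCompl E N := by
    constructor
    · rw [disjoint_iff, inf_comm]; exact hNE
    · rw [codisjoint_iff, eq_top_iff]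
      rintro q -
      obtain ⟨e, he⟩ := hπE_surj (π q)
      have hq : q - (e : Q) ∈ N := by
        rw [← Submodule.Quotient.mk_eq_zero]
        have : π (q - (e : Q)) = 0 := by
          rw [map_sub, ← hπE_apply, he, sub_self]
        simpa [hπ, Submodule.mkQ_apply] using this
      have : q = (e : Q) + (q - (e : Q)) := by abel
      rw [this]
      exact Submodule.add_mem_sup e.2 hq
  set p := Submodule.linearProjOfIsCompl E N hcompl with hp
  have hEinj : Module.Injective R ↥E := by
    constructor
    intro X Y _ _ _ _ f hf g
    obtain ⟨h', hh'⟩ := hQinj.out f hf (E.subtype.comp g)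
    refine ⟨p.comp h', fun x => ?_⟩
    have : h' (f x) = ((g x : ↥E) : Q) := hh' x
    simp only [LinearMap.comp_apply, this, hp]
    exact Submodule.linearProjOfIsCompl_apply_left hcompl (g x)
  set i : A →ₗ[R] ↥E := ι.codRestrict E (fun a => hAE ⟨a, rfl⟩) with hi
  refine ⟨↥E, inferInstance, inferInstance, i, hEinj, ?_, ?_⟩
  · intro a b hab
    exact hι (congrArg Subtype.val hab)
  · intro N' hN'
    obtain ⟨x, hxN', hx0⟩ := (Submodule.ne_bot_iff _).mp hN'
    have hx0' : (x : Q) ≠ 0 := fun h0 => hx0 (Subtype.ext h0)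
    have hspan : (span R {(x : Q)}) ⊓ A' ≠ ⊥ := by
      refine hEss _ ?_ ?_
      · rw [span_singleton_le_iff_mem]; exact x.2
      · simpa [Submodule.span_singleton_eq_bot] using hx0'
    obtain ⟨z, ⟨hz1, hz2⟩, hz0⟩ := (Submodule.ne_bot_iff _).mp hspan
    obtain ⟨r, rfl⟩ := Submodule.mem_span_singleton.mp hz1
    obtain ⟨a, ha⟩ := hz2
    refine (Submodule.ne_bot_iff _).mpr ⟨r • x, ⟨N'.smul_mem r hxN', ?_⟩, ?_⟩
    · exact ⟨a, Subtype.ext (by simpa [hi] using ha)⟩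
    · intro h0
      exact hz0 (by simpa using congrArg Subtype.val h0)

end AuxHull

/-- If `R` is a right H-ring and a right max-ring, then every module is
co-Kasch. -/
theorem stmt10 (R : Type u) [Ring R] (hH : IsHRing R)
    (hmax : ∀ (M : Type u) [AddCommGroup M] [Module R M], Nontrivial M →
      ∃ N : Submodule R M, IsCoatom N) :
    ∀ (M : Type u) [AddCommGroup M] [Module R M], IsCoKasch R M := by
  intro M _ _ K S hS
  obtain ⟨E, _, _, i, hEinj, hiinj, hiess⟩ := exists_injective_hull R ↥S
  set P : Submodule R M := S.comap K.mkQ with hP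
  have hmem : ∀ x ∈ P, K.mkQ x ∈ S := fun x hx => hx
  set g₀ : ↥P →ₗ[R] ↥S := (K.mkQ).restrict hmem with hg₀
  have hg₀surj : Function.Surjective g₀ := by
    rintro ⟨s, hs⟩
    obtain ⟨m, rfl⟩ := K.mkQ_surjective s
    exact ⟨⟨m, hs⟩, rfl⟩
  obtain ⟨f, hf⟩ := hEinj.out P.subtype (Submodule.injective_subtype P) (i.comp g₀)
  set X := LinearMap.range f with hX
  have hrange : LinearMap.range i ≤ X := by
    rintro _ ⟨s, rfl⟩
    obtain ⟨p, rfl⟩ := hg₀surj s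
    exact ⟨↑p, (hf p)⟩
  have hSnt : Nontrivial ↥S := IsSimpleModule.nontrivial R ↥S
  obtain ⟨s0, hs0⟩ := exists_ne (0 : ↥S)
  have hX0 : (i s0 : E) ∈ X := hrange ⟨s0, rfl⟩
  have hXnt : Nontrivial ↥X := by
    refine ⟨⟨⟨i s0, hX0⟩, 0, ?_⟩⟩
    intro hcon
    apply hs0
    apply hiinj
    have := congrArg Subtype.val hcon
    simpa using this
  obtain ⟨Nc, hNc⟩ := hmax ↥X hXnt
  have hTsimple : IsSimpleModule R (↥X ⧸ Nc) := (isSimpleModule_iff_isCoatom).mpr hNc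
  by_cases hiso : Nonempty ((↥S) ≃ₗ[R] (↥X ⧸ Nc))
  · obtain ⟨e⟩ := hiso
    refine ⟨e.symm.toLinearMap ∘ₗ Nc.mkQ ∘ₗ f.rangeRestrict, ?_⟩
    exact e.symm.surjective.comp ((Nc.mkQ_surjective).comp f.surjective_rangeRestrict)
  · exfalso
    obtain ⟨E₂, _, _, i₂, hE₂inj, hi₂inj, hi₂ess⟩ := exists_injective_hull R (↥X ⧸ Nc)
    obtain ⟨hmap, hhm⟩ := hE₂inj.out X.subtype (Submodule.injective_subtype X) (i₂.comp Nc.mkQ)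
    have hzero : hmap = 0 :=
      hH ↥S (↥X ⧸ Nc) E E₂ hS hTsimple (not_nonempty_iff.mp hiso) i i₂
        ⟨hEinj, hiinj, hiess⟩ ⟨hE₂inj, hi₂inj, hi₂ess⟩ hmap
    have hTnt : Nontrivial (↥X ⧸ Nc) := IsSimpleModule.nontrivial R _
    obtain ⟨t0, ht0⟩ := exists_ne (0 : ↥X ⧸ Nc)
    obtain ⟨x0, rfl⟩ := Nc.mkQ_surjective t0
    have hx0 : hmap ↑x0 = i₂ (Nc.mkQ x0) := hhm x0
    rw [hzero] at hx0
    apply ht0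
    apply hi₂inj
    simpa using hx0.symm
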